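/- Converse commutativity: if P₁ : n₁ → m₁ and P₂ : n₂ → m₂ are connected iposets with P₁ ≇ P₂ and P₁ ⊗ P₂ ≅ P₂ ⊗ P₁, then (n₁ = 0 or n₂ = 0) and (m₁ = 0 or m₂ = 0). -/

import Mathlib

/-- Interval order condition for a strict order relation. -/
def IsIntervalOrderRel {α : Type} (lt : α → α → Prop) : Prop :=
  ∀ w x y z, lt w y → lt x z → lt w z ∨ lt x y

/-- Serial composition (ordinal sum) of two strict orders. -/
def serialLt {α β : Type} (r : α → α → Prop) (s : β → β → Prop) :
    α ⊕ β → α ⊕ β → Prop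
  | .inl a, .inl b => r a b
  | .inr a, .inr b => s a b
  | .inl _, .inr _ => True
  | .inr _, .inl _ => False

/-- Parallel composition (disjoint union) of two strict orders. -/
def parallelLt {α β : Type} (r : α → α → Prop) (s : β → β → Prop) :
    α ⊕ β → α ⊕ β → Prop
  | .inl a, .inl b => r a b
  | .inr a, .inr b => s a b
  | _, _ => False

/-- A poset with interfaces: a finite strict poset with injective interface
maps from the discrete posets `[n]` (onto minimal elements) and `[m]` (onto
maximal elements). -/
structure Iposet (n m : ℕ) where
  carrier : Type
  fin : Finite carrier
  lt : carrier → carrier → Prop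
  irrefl : ∀ x, ¬ lt x x
  trans : ∀ x y z, lt x y → lt y z → lt x z
  s : Fin n → carrier
  t : Fin m → carrier
  s_inj : Function.Injective s
  t_inj : Function.Injective t
  s_min : ∀ i x, ¬ lt x (s i)
  t_max : ∀ i x, ¬ lt (t i) x

namespace Iposet

/-- Parallel composition of iposets. -/
def par {n₁ m₁ n₂ m₂ : ℕ} (P : Iposet n₁ m₁) (Q : Iposet n₂ m₂) :
    Iposet (n₁ + n₂) (m₁ + m₂) where
  carrier := P.carrier ⊕ Q.carrier
  fin := by have := P.fin; have := Q.fin; exact inferInstance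
  lt a b := match a, b with
    | .inl x, .inl y => P.lt x y
    | .inr x, .inr y => Q.lt x y
    | _, _ => False
  irrefl := by
    rintro (x | x) h
    · exact P.irrefl x h
    · exact Q.irrefl x h
  trans := by
    rintro (x | x) (y | y) (z | z) h1 h2 <;>
      first
        | exact P.trans _ _ _ h1 h2
        | exact Q.trans _ _ _ h1 h2
        | exact h1.elim
        | exact h2.elim
  s := fun i =>
    if h : (i : ℕ) < n₁ then .inl (P.s ⟨i, h⟩)
    else .inr (Q.s ⟨(i : ℕ) - n₁, by have := i.isLt; omega⟩)
  t := fun i =>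
    if h : (i : ℕ) < m₁ then .inl (P.t ⟨i, h⟩)
    else .inr (Q.t ⟨(i : ℕ) - m₁, by have := i.isLt; omega⟩)
  s_inj := by
    intro i j h
    rcases Nat.lt_or_ge (i : ℕ) n₁ with hi | hi <;>
      rcases Nat.lt_or_ge (j : ℕ) n₁ with hj | hj
    · simp only [dif_pos hi, dif_pos hj] at h
      have h2 := P.s_inj (Sum.inl.inj h)
      simp only [Fin.mk.injEq] at h2
      exact Fin.ext h2
    · simp only [dif_pos hi, dif_neg (Nat.not_lt.mpr hj)] at h
      exact absurd h (by simp)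
    · simp only [dif_neg (Nat.not_lt.mpr hi), dif_pos hj] at h
      exact absurd h (by simp)
    · simp only [dif_neg (Nat.not_lt.mpr hi), dif_neg (Nat.not_lt.mpr hj)] at h
      have h2 := Q.s_inj (Sum.inr.inj h)
      simp only [Fin.mk.injEq] at h2
      exact Fin.ext (by omega)
  t_inj := by
    intro i j h
    rcases Nat.lt_or_ge (i : ℕ) m₁ with hi | hi <;>
      rcases Nat.lt_or_ge (j : ℕ) m₁ with hj | hj
    · simp only [dif_pos hi, dif_pos hj] at h
      have h2 := P.t_inj (Sum.inl.inj h)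
      simp only [Fin.mk.injEq] at h2
      exact Fin.ext h2
    · simp only [dif_pos hi, dif_neg (Nat.not_lt.mpr hj)] at h
      exact absurd h (by simp)
    · simp only [dif_neg (Nat.not_lt.mpr hi), dif_pos hj] at h
      exact absurd h (by simp)
    · simp only [dif_neg (Nat.not_lt.mpr hi), dif_neg (Nat.not_lt.mpr hj)] at h
      have h2 := Q.t_inj (Sum.inr.inj h)
      simp only [Fin.mk.injEq] at h2
      exact Fin.ext (by omega)
  s_min := by
    intro i a
    rcases Nat.lt_or_ge (i : ℕ) n₁ with hi | hi
    · simp only [dif_pos hi]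
      rcases a with x | x
      · exact P.s_min _ x
      · exact fun h => h
    · simp only [dif_neg (Nat.not_lt.mpr hi)]
      rcases a with x | x
      · exact fun h => h
      · exact Q.s_min _ x
  t_max := by
    intro i a
    rcases Nat.lt_or_ge (i : ℕ) m₁ with hi | hi
    · simp only [dif_pos hi]
      rcases a with x | x
      · exact P.t_max _ x
      · exact fun h => h
    · simp only [dif_neg (Nat.not_lt.mpr hi)]
      rcases a with x | x
      · exact fun h => h
      · exact Q.t_max _ x

open Classical in
/-- Gluing composition of iposets: targets of `P` are identified with sources
of `Q`, and every non-target point of `P` is ordered below every non-source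
point of `Q`. -/
noncomputable def glue {n m k : ℕ} (P : Iposet n m) (Q : Iposet m k) :
    Iposet n k where
  carrier := P.carrier ⊕ {q : Q.carrier // ¬ ∃ j, Q.s j = q}
  fin := by have := P.fin; have := Q.fin; exact inferInstance
  lt a b := match a, b with
    | .inl x, .inl y => P.lt x y
    | .inl x, .inr q => (¬ ∃ i, P.t i = x) ∨ (∃ i, P.t i = x ∧ Q.lt (Q.s i) q.val)
    | .inr p, .inr q => Q.lt p.val q.val
    | .inr _, .inl _ => False
  irrefl := by
    rintro (x | q) h
    · exact P.irrefl x h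
    · exact Q.irrefl q.val h
  trans := by
    rintro (x | x) (y | y) (z | z) h1 h2
    · exact P.trans _ _ _ h1 h2
    · left; rintro ⟨j, rfl⟩; exact P.t_max j y h1
    · exact h2.elim
    · rcases h1 with h1 | ⟨i, hi, hlt⟩
      · exact Or.inl h1
      · exact Or.inr ⟨i, hi, Q.trans _ _ _ hlt h2⟩
    · exact h1.elim
    · exact h1.elim
    · exact h2.elim
    · exact Q.trans _ _ _ h1 h2
  s := fun i => .inl (P.s i)
  t := fun i =>
    if h : ∃ j, Q.s j = Q.t i then .inl (P.t h.choose) else .inr ⟨Q.t i, h⟩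
  s_inj := fun i j h => P.s_inj (Sum.inl.inj h)
  t_inj := by
    intro i j h
    by_cases hi : ∃ a, Q.s a = Q.t i <;> by_cases hj : ∃ a, Q.s a = Q.t j
    · simp only [dif_pos hi, dif_pos hj] at h
      have h2 := P.t_inj (Sum.inl.inj h)
      apply Q.t_inj
      rw [← hi.choose_spec, ← hj.choose_spec, h2]
    · simp only [dif_pos hi, dif_neg hj] at h
      exact absurd h (by simp)
    · simp only [dif_neg hi, dif_pos hj] at h
      exact absurd h (by simp)
    · simp only [dif_neg hi, dif_neg hj, Sum.inr.injEq, Subtype.mk.injEq] at h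
      exact Q.t_inj h
  s_min := by
    rintro i (x | q) h
    · exact P.s_min i x h
    · exact h
  t_max := by
    intro i a
    by_cases hi : ∃ j, Q.s j = Q.t i
    · simp only [dif_pos hi]
      rcases a with x | q
      · exact P.t_max _ x
      · rintro (h | ⟨i', hi', hlt⟩)
        · exact h ⟨hi.choose, rfl⟩
        · have he : i' = hi.choose := P.t_inj hi'
          subst he
          rw [hi.choose_spec] at hlt
          exact Q.t_max i q.val hlt
    · simp only [dif_neg hi]
      rcases a with x | q
      · exact fun h => h
      · exact fun h => Q.t_max i q.val h

/-- The empty iposet. -/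
def ipoEmpty : Iposet 0 0 where
  carrier := PEmpty
  fin := inferInstance
  lt _ _ := False
  irrefl _ h := h
  trans := by intro x; exact x.elim
  s := Fin.elim0
  t := Fin.elim0
  s_inj := by intro i; exact i.elim0
  t_inj := by intro i; exact i.elim0
  s_min := fun i => i.elim0
  t_max := fun i => i.elim0

/-- The singleton iposet with empty source and empty target interface. -/
def ipo00 : Iposet 0 0 where
  carrier := PUnit
  fin := inferInstance
  lt _ _ := False
  irrefl _ h := h
  trans := by intro _ _ _ h; exact h.elim
  s := Fin.elim0
  t := Fin.elim0
  s_inj := by intro i; exact i.elim0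
  t_inj := by intro i; exact i.elim0
  s_min := fun i => i.elim0
  t_max := fun i => i.elim0

/-- The singleton iposet with empty source and full target interface. -/
def ipo01 : Iposet 0 1 where
  carrier := PUnit
  fin := inferInstance
  lt _ _ := False
  irrefl _ h := h
  trans := by intro _ _ _ h; exact h.elim
  s := Fin.elim0
  t := fun _ => PUnit.unit
  s_inj := by intro i; exact i.elim0
  t_inj := by intro i j _; exact Subsingleton.elim i j
  s_min := fun i => i.elim0
  t_max := fun _ _ h => h

/-- The singleton iposet with full source and empty target interface. -/
def ipo10 : Iposet 1 0 where
  carrier := PUnit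
  fin := inferInstance
  lt _ _ := False
  irrefl _ h := h
  trans := by intro _ _ _ h; exact h.elim
  s := fun _ => PUnit.unit
  t := Fin.elim0
  s_inj := by intro i j _; exact Subsingleton.elim i j
  t_inj := by intro i; exact i.elim0
  s_min := fun _ _ h => h
  t_max := fun i => i.elim0

/-- The singleton iposet with full source and full target interface. -/
def ipo11 : Iposet 1 1 where
  carrier := PUnit
  fin := inferInstance
  lt _ _ := False
  irrefl _ h := h
  trans := by intro _ _ _ h; exact h.elim
  s := fun _ => PUnit.unit
  t := fun _ => PUnit.unit
  s_inj := by intro i j _; exact Subsingleton.elim i j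
  t_inj := by intro i j _; exact Subsingleton.elim i j
  s_min := fun _ _ h => h
  t_max := fun _ _ h => h

/-- The identity iposet `n → n`: the discrete poset on `n` points with both
interface maps the identity. -/
def ipoId (n : ℕ) : Iposet n n where
  carrier := Fin n
  fin := inferInstance
  lt _ _ := False
  irrefl _ h := h
  trans := by intro _ _ _ h; exact h.elim
  s := id
  t := id
  s_inj := fun _ _ h => h
  t_inj := fun _ _ h => h
  s_min := fun _ _ h => h
  t_max := fun _ _ h => h

/-- Isomorphism of iposets: an order-preserving and order-reflecting bijection
commuting with the interface maps (the interface arities must agree). -/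
def Iso {n m n' m' : ℕ} (P : Iposet n m) (Q : Iposet n' m') : Prop :=
  n = n' ∧ m = m' ∧
  ∃ f : P.carrier ≃ Q.carrier,
    (∀ x y, P.lt x y ↔ Q.lt (f x) (f y)) ∧
    (∀ (i : Fin n) (j : Fin n'), (i : ℕ) = (j : ℕ) → f (P.s i) = Q.s j) ∧
    (∀ (i : Fin m) (j : Fin m'), (i : ℕ) = (j : ℕ) → f (P.t i) = Q.t j)

/-- `Subsu P Q` : `P` is subsumed by `Q`, i.e. there is an interface-preserving
order-reflecting bijection from `P` to `Q`. -/
def Subsu {n m : ℕ} (P Q : Iposet n m) : Prop :=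
  ∃ f : P.carrier ≃ Q.carrier,
    (∀ x y, Q.lt (f x) (f y) → P.lt x y) ∧
    (∀ i, f (P.s i) = Q.s i) ∧ (∀ i, f (P.t i) = Q.t i)

/-- Isomorphism of the underlying posets, ignoring interfaces. -/
def PosetIso {n m n' m' : ℕ} (P : Iposet n m) (Q : Iposet n' m') : Prop :=
  ∃ f : P.carrier ≃ Q.carrier, ∀ x y, P.lt x y ↔ Q.lt (f x) (f y)

/-- An iposet is discrete if its order relation is empty. -/
def IsDiscrete {n m : ℕ} (P : Iposet n m) : Prop := ∀ x y, ¬ P.lt x y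

/-- A starter is a discrete iposet whose target interface map is bijective. -/
def IsStarter {n m : ℕ} (P : Iposet n m) : Prop :=
  IsDiscrete P ∧ Function.Bijective P.t

/-- A terminator is a discrete iposet whose source interface map is bijective. -/
def IsTerminator {n m : ℕ} (P : Iposet n m) : Prop :=
  IsDiscrete P ∧ Function.Bijective P.s

/-- A symmetry is a discrete iposet with both interface maps bijective. -/
def IsSymmetry {n m : ℕ} (P : Iposet n m) : Prop :=
  IsDiscrete P ∧ Function.Bijective P.s ∧ Function.Bijective P.t

/-- Interface consistency: for points lying in both interfaces, the numbering
of the source interface agrees with that of the target interface. -/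
def InterfaceConsistent {n m : ℕ} (P : Iposet n m) : Prop :=
  ∀ (i j : Fin n) (i' j' : Fin m),
    P.s i = P.t i' → P.s j = P.t j' → ((i : ℕ) < (j : ℕ) ↔ (i' : ℕ) < (j' : ℕ))

/-- An iposet is connected if its underlying poset is nonempty and any two
points are joined by a zigzag of order relations. -/
def Connected {n m : ℕ} (P : Iposet n m) : Prop :=
  Nonempty P.carrier ∧
    ∀ x y, Relation.ReflTransGen (fun a b => P.lt a b ∨ P.lt b a) x y

/-- The interval order condition on the underlying poset of an iposet. -/
def IsIntervalOrder {n m : ℕ} (P : Iposet n m) : Prop :=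
  ∀ w x y z, P.lt w y → P.lt x z → P.lt w z ∨ P.lt x y

/-- The class of gluing-parallel iposets: generated (up to isomorphism) from
the empty iposet and the four singleton iposets by gluing and parallel
composition. -/
inductive IsGP : {n m : ℕ} → Iposet n m → Prop
  | empty : IsGP ipoEmpty
  | s00 : IsGP ipo00
  | s01 : IsGP ipo01
  | s10 : IsGP ipo10
  | s11 : IsGP ipo11
  | glue {n m k : ℕ} {P : Iposet n m} {Q : Iposet m k} :
      IsGP P → IsGP Q → IsGP (P.glue Q)
  | par {n₁ m₁ n₂ m₂ : ℕ} {P : Iposet n₁ m₁} {Q : Iposet n₂ m₂} :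
      IsGP P → IsGP Q → IsGP (P.par Q)
  | iso {n m n' m' : ℕ} {P : Iposet n m} {Q : Iposet n' m'} :
      IsGP P → Iso P Q → IsGP Q

/-- The ⊗-closure of the four singleton iposets (up to isomorphism):
parallel compositions of finitely many singletons. -/
inductive InParSingles : {n m : ℕ} → Iposet n m → Prop
  | s00 : InParSingles ipo00
  | s01 : InParSingles ipo01
  | s10 : InParSingles ipo10
  | s11 : InParSingles ipo11
  | par {n₁ m₁ n₂ m₂ : ℕ} {P : Iposet n₁ m₁} {Q : Iposet n₂ m₂} :
      InParSingles P → InParSingles Q → InParSingles (P.par Q)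
  | iso {n m n' m' : ℕ} {P : Iposet n m} {Q : Iposet n' m'} :
      InParSingles P → Iso P Q → InParSingles Q

/-- The induced subiposet of a poset (iposet with empty interfaces) on a
subset of its points. -/
def restrict (P : Iposet 0 0) (A : Set P.carrier) : Iposet 0 0 where
  carrier := {x : P.carrier // x ∈ A}
  fin := by have := P.fin; exact inferInstance
  lt a b := P.lt a.val b.val
  irrefl a := P.irrefl a.val
  trans := fun a b c h1 h2 => P.trans _ _ _ h1 h2
  s := Fin.elim0
  t := Fin.elim0
  s_inj := by intro i; exact i.elim0
  t_inj := by intro i; exact i.elim0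
  s_min := fun i => i.elim0
  t_max := fun i => i.elim0

theorem par_s_left' {n₁ m₁ n₂ m₂ : ℕ} (P : Iposet n₁ m₁) (Q : Iposet n₂ m₂)
    (i : Fin (n₁ + n₂)) (h : (i : ℕ) < n₁) :
    (P.par Q).s i = Sum.inl (P.s ⟨i, h⟩) := dif_pos h

theorem par_s_right' {n₁ m₁ n₂ m₂ : ℕ} (P : Iposet n₁ m₁) (Q : Iposet n₂ m₂)
    (i : Fin (n₁ + n₂)) (h : ¬ (i : ℕ) < n₁) :
    (P.par Q).s i = Sum.inr (Q.s ⟨(i : ℕ) - n₁, by have := i.isLt; omega⟩) :=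
  dif_neg h

theorem par_t_left' {n₁ m₁ n₂ m₂ : ℕ} (P : Iposet n₁ m₁) (Q : Iposet n₂ m₂)
    (i : Fin (m₁ + m₂)) (h : (i : ℕ) < m₁) :
    (P.par Q).t i = Sum.inl (P.t ⟨i, h⟩) := dif_pos h

theorem par_t_right' {n₁ m₁ n₂ m₂ : ℕ} (P : Iposet n₁ m₁) (Q : Iposet n₂ m₂)
    (i : Fin (m₁ + m₂)) (h : ¬ (i : ℕ) < m₁) :
    (P.par Q).t i = Sum.inr (Q.t ⟨(i : ℕ) - m₁, by have := i.isLt; omega⟩) :=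
  dif_neg h

theorem par_lt_sameSide {n₁ m₁ n₂ m₂ : ℕ} {P : Iposet n₁ m₁} {Q : Iposet n₂ m₂}
    {a b : P.carrier ⊕ Q.carrier} (h : (P.par Q).lt a b) :
    a.isLeft = b.isLeft := by
  rcases a with a | a <;> rcases b with b | b
  · rfl
  · exact h.elim
  · exact h.elim
  · rfl

end Iposet

open Iposet in
/-- Converse commutativity: if two connected, non-isomorphic iposets have
commuting parallel compositions, then their interface arities vanish
appropriately. -/
theorem par_comm_converse {n₁ m₁ n₂ m₂ : ℕ}
    (P₁ : Iposet n₁ m₁) (P₂ : Iposet n₂ m₂)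
    (h₁ : Connected P₁) (h₂ : Connected P₂)
    (hne : ¬ Iso P₁ P₂) (hcomm : Iso (P₁.par P₂) (P₂.par P₁)) :
    (n₁ = 0 ∨ n₂ = 0) ∧ (m₁ = 0 ∨ m₂ = 0) := by
  classical
  obtain ⟨hn, hm, f, hlt, hs, ht⟩ := hcomm
  obtain ⟨⟨x₀⟩, hconn₁⟩ := h₁
  obtain ⟨⟨y₀⟩, hconn₂⟩ := h₂
  have sideP1 : ∀ x : P₁.carrier,
      (f (Sum.inl x)).isLeft = (f (Sum.inl x₀)).isLeft := by
    intro x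
    have h := hconn₁ x₀ x
    induction h with
    | refl => rfl
    | tail _ hstep ih =>
      rename_i b c _
      rcases hstep with h' | h'
      · exact (par_lt_sameSide ((hlt (Sum.inl b) (Sum.inl c)).mp h')).symm.trans ih
      · exact (par_lt_sameSide ((hlt (Sum.inl c) (Sum.inl b)).mp h')).trans ih
  have sideP2 : ∀ y : P₂.carrier,
      (f (Sum.inr y)).isLeft = (f (Sum.inr y₀)).isLeft := by
    intro y
    have h := hconn₂ y₀ y
    induction h with
    | refl => rfl
    | tail _ hstep ih =>
      rename_i b c _
      rcases hstep with h' | h'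
      · exact (par_lt_sameSide ((hlt (Sum.inr b) (Sum.inr c)).mp h')).symm.trans ih
      · exact (par_lt_sameSide ((hlt (Sum.inr c) (Sum.inr b)).mp h')).trans ih
  rcases hfx : f (Sum.inl x₀) with z₀ | z₀
  · -- Case A : P₁'s copy maps to P₂'s copy; derive Iso P₁ P₂, contradiction.
    exfalso
    have hA : ∀ x : P₁.carrier, ∃ z, f (Sum.inl x) = Sum.inl z := by
      intro x
      have hside := sideP1 x
      rw [hfx] at hside
      rcases hx : f (Sum.inl x) with z | z
      · exact ⟨z, rfl⟩
      · rw [hx] at hside; simp at hside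
    have hB : ∀ y : P₂.carrier, ∃ w, f (Sum.inr y) = Sum.inr w := by
      have hy0 : ∃ w, f (Sum.inr y₀) = Sum.inr w := by
        rcases hy : f (Sum.inr y₀) with w | w
        · exfalso
          obtain ⟨a, ha⟩ := f.surjective (Sum.inr x₀)
          rcases a with x | y
          · obtain ⟨z, hz⟩ := hA x
            rw [hz] at ha
            exact absurd ha (by simp)
          · have hside := sideP2 y
            rw [ha, hy] at hside
            simp at hside
        · exact ⟨w, rfl⟩
      intro y
      obtain ⟨w0, hw0⟩ := hy0
      have hside := sideP2 y
      rw [hw0] at hside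
      rcases hy : f (Sum.inr y) with w | w
      · rw [hy] at hside; simp at hside
      · exact ⟨w, rfl⟩
    -- arities agree
    have hle1 : ∀ i, i < n₁ → i < n₂ := by
      intro i hi
      by_contra hic
      have h1 := hs ⟨i, by omega⟩ ⟨i, by omega⟩ rfl
      rw [par_s_left' P₁ P₂ _ hi, par_s_right' P₂ P₁ _ hic] at h1
      obtain ⟨z, hz⟩ := hA _
      rw [hz] at h1
      exact absurd h1 (by simp)
    have hle2 : ∀ j, j < n₂ → n₂ ≤ n₁ + j := by
      intro j hj
      by_contra hic
      push_neg at hic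
      have h1 := hs ⟨n₁ + j, by omega⟩ ⟨n₁ + j, by omega⟩ rfl
      rw [par_s_right' P₁ P₂ ⟨n₁ + j, by omega⟩ (by show ¬ n₁ + j < n₁; omega),
        par_s_left' P₂ P₁ ⟨n₁ + j, by omega⟩ (by show n₁ + j < n₂; omega)] at h1
      obtain ⟨w, hw⟩ := hB _
      rw [hw] at h1
      exact absurd h1 (by simp)
    have hmle1 : ∀ i, i < m₁ → i < m₂ := by
      intro i hi
      by_contra hic
      have h1 := ht ⟨i, by omega⟩ ⟨i, by omega⟩ rfl
      rw [par_t_left' P₁ P₂ _ hi, par_t_right' P₂ P₁ _ hic] at h1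
      obtain ⟨z, hz⟩ := hA _
      rw [hz] at h1
      exact absurd h1 (by simp)
    have hmle2 : ∀ j, j < m₂ → m₂ ≤ m₁ + j := by
      intro j hj
      by_contra hic
      push_neg at hic
      have h1 := ht ⟨m₁ + j, by omega⟩ ⟨m₁ + j, by omega⟩ rfl
      rw [par_t_right' P₁ P₂ ⟨m₁ + j, by omega⟩ (by show ¬ m₁ + j < m₁; omega),
        par_t_left' P₂ P₁ ⟨m₁ + j, by omega⟩ (by show m₁ + j < m₂; omega)] at h1
      obtain ⟨w, hw⟩ := hB _
      rw [hw] at h1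
      exact absurd h1 (by simp)
    have hn12 : n₁ = n₂ := by
      rcases Nat.eq_zero_or_pos n₂ with h0 | h0
      · rcases Nat.eq_zero_or_pos n₁ with h0' | h0'
        · omega
        · have := hle1 (n₁ - 1) (by omega); omega
      · have h2 := hle2 0 h0
        rcases Nat.eq_zero_or_pos n₁ with h0' | h0'
        · omega
        · have := hle1 (n₁ - 1) (by omega); omega
    have hm12 : m₁ = m₂ := by
      rcases Nat.eq_zero_or_pos m₂ with h0 | h0
      · rcases Nat.eq_zero_or_pos m₁ with h0' | h0'
        · omega
        · have := hmle1 (m₁ - 1) (by omega); omega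
      · have h2 := hmle2 0 h0
        rcases Nat.eq_zero_or_pos m₁ with h0' | h0'
        · omega
        · have := hmle1 (m₁ - 1) (by omega); omega
    -- the bijection
    set g : P₁.carrier → P₂.carrier := fun x => (hA x).choose with hgdef
    have hg : ∀ x, f (Sum.inl x) = Sum.inl (g x) := fun x => (hA x).choose_spec
    have ginj : Function.Injective g := by
      intro x x' h
      have h2 : f (Sum.inl x) = f (Sum.inl x') := by rw [hg, hg, h]
      exact Sum.inl.inj (f.injective h2)
    have gsurj : Function.Surjective g := by
      intro z
      obtain ⟨a, ha⟩ := f.surjective (Sum.inl z)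
      rcases a with x | y
      · rw [hg x] at ha
        exact ⟨x, Sum.inl.inj ha⟩
      · obtain ⟨w, hw⟩ := hB y
        rw [hw] at ha
        exact absurd ha (by simp)
    refine hne ⟨hn12, hm12, Equiv.ofBijective g ⟨ginj, gsurj⟩, ?_, ?_, ?_⟩
    · intro x y
      have h2 := hlt (Sum.inl x) (Sum.inl y)
      rw [hg x, hg y] at h2
      exact h2
    · intro i j hij
      have h1 := hs ⟨i, by have := i.isLt; omega⟩ ⟨j, by have := j.isLt; omega⟩ hij
      rw [par_s_left' P₁ P₂ _ i.isLt, par_s_left' P₂ P₁ _ j.isLt, hg] at h1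
      exact Sum.inl.inj h1
    · intro i j hij
      have h1 := ht ⟨i, by have := i.isLt; omega⟩ ⟨j, by have := j.isLt; omega⟩ hij
      rw [par_t_left' P₁ P₂ _ i.isLt, par_t_left' P₂ P₁ _ j.isLt, hg] at h1
      exact Sum.inl.inj h1
  · -- Case B : P₁'s copy maps to the inr copy; interfaces must vanish.
    have hA' : ∀ x : P₁.carrier, ∃ z, f (Sum.inl x) = Sum.inr z := by
      intro x
      have hside := sideP1 x
      rw [hfx] at hside
      rcases hx : f (Sum.inl x) with z | z
      · rw [hx] at hside; simp at hside
      · exact ⟨z, rfl⟩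
    constructor
    · by_contra hc
      push_neg at hc
      obtain ⟨hc1, hc2⟩ := hc
      have h1 := hs ⟨0, by omega⟩ ⟨0, by omega⟩ rfl
      rw [par_s_left' P₁ P₂ ⟨0, by omega⟩ (by show 0 < n₁; omega),
        par_s_left' P₂ P₁ ⟨0, by omega⟩ (by show 0 < n₂; omega)] at h1
      obtain ⟨z, hz⟩ := hA' _
      rw [hz] at h1
      exact absurd h1 (by simp)
    · by_contra hc
      push_neg at hc
      obtain ⟨hc1, hc2⟩ := hc
      have h1 := ht ⟨0, by omega⟩ ⟨0, by omega⟩ rfl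
      rw [par_t_left' P₁ P₂ ⟨0, by omega⟩ (by show 0 < m₁; omega),
        par_t_left' P₂ P₁ ⟨0, by omega⟩ (by show 0 < m₂; omega)] at h1
      obtain ⟨z, hz⟩ := hA' _
      rw [hz] at h1
      exact absurd h1 (by simp)
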